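/- If $h : G \to H$ is a continuous injective group homomorphism of topological groups and $H$ is weakly 2-swelling, then $G$ is weakly 2-swelling. -/

import Mathlib

open Pointwise

def IsWeaklyTwoSwelling (K : Type*) [Group K] [TopologicalSpace K] : Prop :=
  ∀ (A B : Set K), IsCompact A → IsCompact B → ∀ a b : K,
    a • A ∩ b • B = ∅ → a • A ∪ b • B ⊆ A ∪ B →
      a • A ∪ b • B = A ∪ B ∧ A ∩ B = ∅

theorem stmt_11 {G H : Type*} [Group G] [TopologicalSpace G] [IsTopologicalGroup G]
    [Group H] [TopologicalSpace H] [IsTopologicalGroup H]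
    (h : G →* H) (hc : Continuous h) (hi : Function.Injective h)
    (hH : IsWeaklyTwoSwelling H) : IsWeaklyTwoSwelling G := by
  intro A B hA hB a b hdisj hsub
  have key : ∀ (c : G) (S : Set G), h '' (c • S) = h c • (h '' S) := by
    intro c S
    ext x
    simp only [Set.mem_image, Set.mem_smul_set, smul_eq_mul, map_mul]
    constructor
    · rintro ⟨y, ⟨z, hz, rfl⟩, rfl⟩
      exact ⟨h z, ⟨z, hz, rfl⟩, (map_mul h c z).symm⟩
    · rintro ⟨y, ⟨z, hz, rfl⟩, rfl⟩
      exact ⟨c * z, ⟨z, hz, rfl⟩, map_mul h c z⟩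
  have hdisj' : h a • (h '' A) ∩ h b • (h '' B) = ∅ := by
    rw [← key, ← key, ← Set.image_inter hi, hdisj, Set.image_empty]
  have hsub' : h a • (h '' A) ∪ h b • (h '' B) ⊆ h '' A ∪ h '' B := by
    rw [← key, ← key, ← Set.image_union, ← Set.image_union]
    exact Set.image_mono hsub
  obtain ⟨heq, hAB⟩ := hH (h '' A) (h '' B) (hA.image hc) (hB.image hc) (h a) (h b) hdisj' hsub'
  constructor
  · apply Set.image_injective.mpr hi
    rw [Set.image_union, key, key, Set.image_union]
    exact heq
  · rw [← Set.image_eq_empty (f := h), Set.image_inter hi]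
    exact hAB
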